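/- Let μ and ν be permutations of {1,…,k} with μ ⪯ ν. Then for every permutation σ of {1,…,k}, all n×n real matrices H_1,…,H_k, and every k-tensor T on ℝⁿ: ⟨P_μ(T), H_1 ∘_σ ⋯ ∘_σ H_k⟩ = ⟨P_μ(T), H_1 ∘_{σ∘ν} ⋯ ∘_{σ∘ν} H_k⟩. -/
import Mathlib


open Finset

/-- The `σ`-Hadamard product of the matrices `H 1, ..., H k`:
`(H_1 ∘_σ ⋯ ∘_σ H_k)^{i_1…i_k} = ∏_s H_s^{i_s i_{σ⁻¹(s)}}`. -/
def hadP {n k : ℕ} (σ : Equiv.Perm (Fin k)) (H : Fin k → Matrix (Fin n) (Fin n) ℝ) :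
    (Fin k → Fin n) → ℝ :=
  fun i => ∏ s, H s (i s) (i (σ⁻¹ s))

/-- The inner product of two k-tensors: `⟨T₁, T₂⟩ = Σ_{i_1,…,i_k} T₁^{i_1…i_k} T₂^{i_1…i_k}`. -/
def tinner {n k : ℕ} (T₁ T₂ : (Fin k → Fin n) → ℝ) : ℝ :=
  ∑ i : Fin k → Fin n, T₁ i * T₂ i

/-- `P_μ(T)` keeps the entries of `T` on the diagonal "subspace" of `μ` and zeroes the rest. -/
def Pmu {n k : ℕ} (μ : Equiv.Perm (Fin k)) (T : (Fin k → Fin n) → ℝ) :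
    (Fin k → Fin n) → ℝ :=
  fun i => if ∀ s, i s = i (μ s) then T i else 0

/-- `μ ⪯ σ`, i.e. `σ` refines `μ`: every orbit `{σ^l(s) : l = 1,2,…}` of `σ` is contained
in an orbit `{μ^l(r) : l = 1,2,…}` of `μ`. -/
def Refines {k : ℕ} (μ σ : Equiv.Perm (Fin k)) : Prop :=
  ∀ s : Fin k, ∃ r : Fin k,
    {x | ∃ l : ℕ, 1 ≤ l ∧ x = (σ ^ l) s} ⊆ {x | ∃ l : ℕ, 1 ≤ l ∧ x = (μ ^ l) r}

/-- Corollary 3.2: if `μ ⪯ ν`, then for any permutation `σ`, matrices `H_1,…,H_k`,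
and tensor `T`:
`⟨P_μ(T), H_1 ∘_σ ⋯ ∘_σ H_k⟩ = ⟨P_μ(T), H_1 ∘_{σ∘ν} ⋯ ∘_{σ∘ν} H_k⟩`. -/
theorem transfer_diagonal_refine {n k : ℕ} (μ ν : Equiv.Perm (Fin k))
    (hμν : Refines μ ν) (σ : Equiv.Perm (Fin k))
    (H : Fin k → Matrix (Fin n) (Fin n) ℝ) (T : (Fin k → Fin n) → ℝ) :
    tinner (Pmu μ T) (hadP σ H) = tinner (Pmu μ T) (hadP (σ * ν) H) := by
  unfold tinner
  refine Finset.sum_congr rfl fun i _ => ?_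
  unfold Pmu
  by_cases h : ∀ s, i s = i (μ s)
  · rw [if_pos h]
    congr 1
    -- i is constant on μ-orbits
    have horb : ∀ (l : ℕ) (r : Fin k), i ((μ ^ l) r) = i r := by
      intro l
      induction l with
      | zero => intro r; simp
      | succ m ih =>
        intro r
        have : (μ ^ (m + 1)) r = (μ ^ m) (μ r) := by
          rw [pow_succ]; rfl
        rw [this, ih (μ r), ← h r]
    -- i is ν⁻¹-invariant
    have hν : ∀ t : Fin k, i (ν⁻¹ t) = i t := by
      intro t
      obtain ⟨r, hr⟩ := hμν t
      have hm : 1 ≤ orderOf ν := orderOf_pos ν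
      have h1 : t ∈ {x | ∃ l : ℕ, 1 ≤ l ∧ x = (ν ^ l) t} :=
        ⟨orderOf ν, hm, by rw [pow_orderOf_eq_one]; rfl⟩
      have h2 : ν⁻¹ t ∈ {x | ∃ l : ℕ, 1 ≤ l ∧ x = (ν ^ l) t} := by
        refine ⟨2 * orderOf ν - 1, by omega, ?_⟩
        have : ν ^ (2 * orderOf ν - 1) = ν⁻¹ := by
          have h2m : ν ^ (2 * orderOf ν) = 1 := by
            rw [mul_comm, pow_mul, pow_orderOf_eq_one, one_pow]
          have : ν ^ (2 * orderOf ν - 1) * ν = 1 := by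
            rw [← pow_succ]
            have : 2 * orderOf ν - 1 + 1 = 2 * orderOf ν := by omega
            rw [this, h2m]
          exact eq_inv_of_mul_eq_one_left (by rw [← this])
        rw [this]
      obtain ⟨l1, _, e1⟩ := hr h1
      obtain ⟨l2, _, e2⟩ := hr h2
      rw [e2, e1, horb, horb]
    unfold hadP
    refine Finset.prod_congr rfl fun s _ => ?_
    congr 1
    have : (σ * ν)⁻¹ s = ν⁻¹ (σ⁻¹ s) := by simp [mul_inv_rev]
    rw [this, hν]
  · simp [h]
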